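/- Let G be a simple graph and u, v distinct vertices with uv not an edge of G. Then SO(G) < SO(G + uv), where G + uv is the graph obtained by adding the edge uv. That is, the Sombor index is strictly increased by adding an edge. -/
import Mathlib

set_option maxHeartbeats 1000000

/-- The Sombor index of a finite simple graph:
`SO(G) = Σ_{uv ∈ E(G)} √(d(u)² + d(v)²)`. -/
noncomputable def somborIndex {V : Type*} [Fintype V] (G : SimpleGraph V) : ℝ := by
  classical
  exact ∑ e ∈ G.edgeFinset,
    Sym2.lift ⟨fun u v => Real.sqrt ((G.degree u : ℝ)^2 + (G.degree v : ℝ)^2),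
      fun u v => by simp [add_comm]⟩ e

lemma degree_mono_aux {V : Type*} [Fintype V] {G G' : SimpleGraph V} (h : G ≤ G') (w : V)
    [Fintype (G.neighborSet w)] [Fintype (G'.neighborSet w)] :
    G.degree w ≤ G'.degree w := by
  classical
  simp only [SimpleGraph.degree]
  apply Finset.card_le_card
  intro x hx
  simp only [SimpleGraph.mem_neighborFinset] at hx ⊢
  exact h hx

/-- Adding an edge strictly increases the Sombor index. -/
theorem somborIndex_lt_of_add_edge {V : Type*} [Fintype V] (G : SimpleGraph V)
    (u v : V) (huv : u ≠ v) (h : ¬ G.Adj u v) :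
    somborIndex G < somborIndex (G ⊔ SimpleGraph.fromEdgeSet {s(u, v)}) := by
  classical
  set G' := G ⊔ SimpleGraph.fromEdgeSet {s(u, v)} with hG'
  have hle : G ≤ G' := le_sup_left
  unfold somborIndex
  refine lt_of_le_of_lt (Finset.sum_le_sum ?_) (Finset.sum_lt_sum_of_subset
    (i := s(u, v)) ?_ ?_ ?_ ?_ ?_)
  · intro e _
    induction e using Sym2.ind with
    | _ a b =>
      simp only [Sym2.lift_mk]
      apply Real.sqrt_le_sqrt
      gcongr <;>
        first
          | exact Nat.cast_nonneg _
          | (convert degree_mono_aux hle a using 2 <;> rfl)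
          | (convert degree_mono_aux hle b using 2 <;> rfl)
  · intro e he
    simp only [SimpleGraph.mem_edgeFinset] at he ⊢
    exact SimpleGraph.edgeSet_mono hle he
  · simp only [SimpleGraph.mem_edgeFinset]
    rw [SimpleGraph.mem_edgeSet]
    simp [hG', huv]
  · simpa [SimpleGraph.mem_edgeFinset] using h
  · simp only [Sym2.lift_mk]
    apply Real.sqrt_pos.mpr
    have hadj : G'.Adj u v := by simp [hG', huv]
    have h1 : 0 < G'.degree u := by
      rw [SimpleGraph.degree_pos_iff_exists_adj]
      exact ⟨v, hadj⟩
    have h2 : (0 : ℝ) < (G'.degree u : ℝ) := by exact_mod_cast h1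
    have key : (0 : ℝ) < (G'.degree u : ℝ)^2 + (G'.degree v : ℝ)^2 := by
      nlinarith [sq_nonneg ((G'.degree v : ℝ))]
    convert key using 2 <;> congr!
  · intro j _ _
    induction j using Sym2.ind with
    | _ a b =>
      simp only [Sym2.lift_mk]
      exact Real.sqrt_nonneg _
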